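/- Soundness of gradient-based bug localization for independent straight-line traces: suppose a buggy trace and a correct trace of the same length differ only in statement s_i, all statements are semantically independent and upward exposed, and the buggy statement actually changes the forward-reachable state. Then the gradient of the difference between the buggy forward execution and the correct forward execution is nonzero exactly at position i, so the suspicious set computed by comparing consecutive differences contains i. -/

import Mathlib

structure Stmt (V D : Type) where
  lhs : V
  rhs : (V → D) → D

def exec {V D : Type} [DecidableEq V] (s : Stmt V D) (σ : V → D) : V → D :=
  Function.update σ s.lhs (s.rhs σ)

def run {V D : Type} [DecidableEq V] (σ : V → D) (t : List (Stmt V D)) : V → D :=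
  t.foldl (fun σ s => exec s σ) σ

/-- Number of variables on which two states disagree. -/
def diff {V D : Type} [Fintype V] [DecidableEq D] (σ τ : V → D) : ℕ :=
  (Finset.univ.filter fun v => σ v ≠ τ v).card

def Reads {V D : Type} [DecidableEq V] (s : Stmt V D) (x : V) : Prop :=
  ∃ (σ : V → D) (d : D), s.rhs (Function.update σ x d) ≠ s.rhs σ


lemma run_take_succ {V D : Type} [DecidableEq V] (pre : V → D)
    (P : List (Stmt V D)) (k : ℕ) (hk : k < P.length) :
    run pre (P.take (k+1)) = exec (P[k]) (run pre (P.take k)) := by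
  rw [List.take_succ, List.getElem?_eq_getElem hk]
  simp only [Option.toList_some, run, List.foldl_append, List.foldl_cons, List.foldl_nil]

lemma diff_eq_zero' {V D : Type} [Fintype V] [DecidableEq D] (σ τ : V → D)
    (h : σ = τ) : diff σ τ = 0 := by
  simp [diff, h]

lemma diff_eq_one' {V D : Type} [Fintype V] [DecidableEq V] [DecidableEq D] (σ τ : V → D)
    (x : V) (hx : σ x ≠ τ x) (h : ∀ v, v ≠ x → σ v = τ v) : diff σ τ = 1 := by
  have : (Finset.univ.filter fun v => σ v ≠ τ v) = {x} := by
    ext v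
    simp only [Finset.mem_filter, Finset.mem_univ, true_and, Finset.mem_singleton]
    constructor
    · intro hv; by_contra hvx; exact hv (h v hvx)
    · rintro rfl; exact hx
  simp [diff, this]

lemma not_reads {V D : Type} [DecidableEq V] (s : Stmt V D) (x : V)
    (h : ¬ Reads s x) (σ : V → D) (d : D) :
    s.rhs (Function.update σ x d) = s.rhs σ := by
  by_contra hc
  exact h ⟨σ, d, hc⟩

/-- soundness of gradient-based bug localization for independent
straight-line traces: if a buggy trace P and a correct trace Q of the same
length differ only in statement s_i, all statements are semantically
independent (distinct left-hand sides, hence upward exposed, and no statement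
reads a variable written by another), and the buggy statement actually changes
the forward-reachable state, then the gradient of the difference between the
two forward executions is nonzero exactly at position i; in particular the
suspicious set { k : diff_k ≠ diff_{k+1} } contains i. -/
theorem gradient_localization_sound {V D : Type} [DecidableEq V] [Fintype V] [DecidableEq D]
    (P Q : List (Stmt V D)) (pre : V → D) (i : ℕ)
    (hlen : P.length = Q.length) (hi : i < P.length)
    (heq : ∀ (j : ℕ) (hj : j < P.length), j ≠ i → P[j] = Q[j]'(by omega))
    (hlhs : (P[i]'hi).lhs = (Q[i]'(by omega)).lhs)
    (hnodupP : (P.map Stmt.lhs).Nodup) (hnodupQ : (Q.map Stmt.lhs).Nodup)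
    (hindP : ∀ (j k : ℕ) (hj : j < P.length) (hk : k < P.length), j ≠ k →
      ¬ Reads (P[j]'hj) ((P[k]'hk).lhs))
    (hindQ : ∀ (j k : ℕ) (hj : j < Q.length) (hk : k < Q.length), j ≠ k →
      ¬ Reads (Q[j]'hj) ((Q[k]'hk).lhs))
    (hbug : (P[i]'hi).rhs (run pre (P.take i)) ≠ (Q[i]'(by omega)).rhs (run pre (Q.take i))) :
    ∀ (k : ℕ), k < P.length →
      (diff (run pre (P.take k)) (run pre (Q.take k)) ≠
        diff (run pre (P.take (k + 1))) (run pre (Q.take (k + 1))) ↔ k = i) := by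
  -- prefixes below i agree
  have hiQ : i < Q.length := hlen ▸ hi
  have htake : ∀ k, k ≤ i → P.take k = Q.take k := by
    intro k hk
    apply List.ext_getElem
    · simp [hlen]
    · intro j h1 h2
      have hj : j < i := by simp at h1; omega
      rw [List.getElem_take, List.getElem_take]
      exact heq j (by omega) (by omega)
  have hrun_eq : ∀ k, k ≤ i → run pre (P.take k) = run pre (Q.take k) := by
    intro k hk; rw [htake k hk]
  set x := (P[i]'hi).lhs with hx
  set σ := run pre (P.take i) with hσ
  have hσQ : run pre (Q.take i) = σ := (hrun_eq i le_rfl).symm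
  set a := (P[i]'hi).rhs σ with ha
  set b := (Q[i]'hiQ).rhs σ with hb
  have hab : a ≠ b := by rw [hσQ] at hbug; exact hbug
  -- distinct lhs from nodup
  have hlhsP : ∀ (j k : ℕ) (hj : j < P.length) (hk : k < P.length), j ≠ k →
      (P[j]'hj).lhs ≠ (P[k]'hk).lhs := by
    intro j k hj hk hjk hc
    have h1 : (P.map Stmt.lhs)[j]'(by simpa using hj) = (P.map Stmt.lhs)[k]'(by simpa using hk) := by
      simpa using hc
    exact hjk ((List.Nodup.getElem_inj_iff hnodupP).mp h1)
  have key : ∀ k, i + 1 ≤ k → k ≤ P.length →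
      (run pre (P.take k)) x = a ∧ (run pre (Q.take k)) x = b ∧
      ∀ v, v ≠ x → run pre (P.take k) v = run pre (Q.take k) v := by
    intro k hk
    induction k, hk using Nat.le_induction with
    | base =>
      intro _
      rw [run_take_succ pre P i hi, run_take_succ pre Q i hiQ, hσQ, ← hσ]
      refine ⟨?_, ?_, ?_⟩
      · simp [exec, ← ha, hx]
      · simp only [exec]; rw [← hlhs]; simp [hb]
      · intro v hv
        simp [exec, ← hx, Function.update_of_ne hv, Function.update_of_ne (hlhs ▸ hv)]
    | succ k hk ih =>
      intro hkL
      obtain ⟨ihP, ihQ, ihv⟩ := ih (by omega)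
      have hkP : k < P.length := by omega
      have hkQ : k < Q.length := by omega
      have hPQk : P[k]'hkP = Q[k]'hkQ := heq k hkP (by omega)
      set s := P[k]'hkP with hs
      have hslhs : s.lhs ≠ x := hlhsP k i hkP hi (by omega)
      have hnr : ¬ Reads s x := hindP k i hkP hi (by omega)
      -- the two states before step k
      set σP := run pre (P.take k) with hσP
      set σQ := run pre (Q.take k) with hσQ2
      have hupd : σQ = Function.update σP x (σQ x) := by
        funext v
        by_cases hv : v = x
        · subst hv; simp
        · rw [Function.update_of_ne hv]; exact (ihv v hv).symm
      have hrhs : s.rhs σQ = s.rhs σP := by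
        rw [hupd]; exact not_reads s x hnr σP (σQ x)
      rw [run_take_succ pre P k hkP, run_take_succ pre Q k hkQ, ← hPQk, ← hs, ← hσP, ← hσQ2]
      refine ⟨?_, ?_, ?_⟩
      · simp only [exec]; rw [Function.update_of_ne (Ne.symm hslhs)]; exact ihP
      · simp only [exec]; rw [Function.update_of_ne (Ne.symm hslhs)]; exact ihQ
      · intro v hv
        by_cases hvs : v = s.lhs
        · subst hvs; simp [exec, hrhs]
        · simp [exec, Function.update_of_ne hvs, ihv v hv]
  intro k hk
  rcases lt_trichotomy k i with h | h | h
  · have e0 : diff (run pre (P.take k)) (run pre (Q.take k)) = 0 :=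
      diff_eq_zero' _ _ (hrun_eq k (by omega))
    have e1 : diff (run pre (P.take (k+1))) (run pre (Q.take (k+1))) = 0 :=
      diff_eq_zero' _ _ (hrun_eq (k+1) (by omega))
    rw [e0, e1]
    simp; omega
  · subst h
    have e0 : diff (run pre (P.take k)) (run pre (Q.take k)) = 0 :=
      diff_eq_zero' _ _ (hrun_eq k le_rfl)
    obtain ⟨h1, h2, h3⟩ := key (k+1) le_rfl (by omega)
    have e1 : diff (run pre (P.take (k+1))) (run pre (Q.take (k+1))) = 1 := by
      refine diff_eq_one' _ _ x ?_ h3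
      rw [h1, h2]; exact hab
    rw [e0, e1]; simp
  · obtain ⟨h1, h2, h3⟩ := key k (by omega) (by omega)
    obtain ⟨h1', h2', h3'⟩ := key (k+1) (by omega) (by omega)
    have e0 : diff (run pre (P.take k)) (run pre (Q.take k)) = 1 := by
      refine diff_eq_one' _ _ x ?_ h3
      rw [h1, h2]; exact hab
    have e1 : diff (run pre (P.take (k+1))) (run pre (Q.take (k+1))) = 1 := by
      refine diff_eq_one' _ _ x ?_ h3'
      rw [h1', h2']; exact hab
    rw [e0, e1]; simp; omega
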